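/- For every real k with 11/7 ≤ k < 5/3 (i.e., p₅/p₄ ≤ k < p₃/p₂), the first k-Ramanujan prime satisfies R₁⁽ᵏ⁾ = 5. -/

import Mathlib

open Real

/-- The prime counting function `π` extended to the reals:
`primePi x` is the number of primes `p ≤ x`. -/
noncomputable def primePi (x : ℝ) : ℕ := Nat.primeCounting ⌊x⌋₊

/-- The first `k`-Ramanujan prime `R₁⁽ᵏ⁾`: the least positive integer `m` such that
`π(x) - π(x/k) ≥ 1` for every real `x ≥ m`. -/
noncomputable def firstRamanujanPrime (k : ℝ) : ℕ :=
  sInf {m : ℕ | 0 < m ∧ ∀ x : ℝ, (m : ℝ) ≤ x → primePi (x / k) < primePi x}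

/-- The `n`-th prime number, with `nthPrime 1 = 2`, `nthPrime 2 = 3`, … -/
noncomputable def nthPrime (n : ℕ) : ℕ := Nat.nth Nat.Prime (n - 1)

namespace RamanujanAux

open Finset Nat


theorem fact_fac {p : ℕ} (hp : p.Prime) {n b : ℕ} (hb : Nat.log p n < b) :
    (n !).factorization p = ∑ i ∈ Ico 1 b, n / p ^ i := by
  have h1 := Nat.Prime.emultiplicity_factorial hp hb
  have h2 := Nat.multiplicity_eq_factorization hp (Nat.factorial_ne_zero n)
  have := multiplicity_eq_of_emultiplicity_eq_some h1
  omega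

section
variable (t : ℕ)

-- divisions compatibility
theorem div_compat (q : ℕ) (hq : 0 < q) :
    15*t/q = (30*t/q)/2 ∧ 10*t/q = (30*t/q)/3 ∧ 6*t/q = (30*t/q)/5 ∧ t/q = (30*t/q)/30 := by
  refine ⟨?_, ?_, ?_, ?_⟩ <;> rw [Nat.div_div_eq_div_mul]
  · rw [show 30*t = 15*t*2 by ring, show q*2 = 2*q by ring, show 15*t*2 = 2*(15*t) by ring,
      Nat.mul_div_mul_left _ _ (by norm_num)]
  · rw [show 30*t = 3*(10*t) by ring, show q*3 = 3*q by ring,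
      Nat.mul_div_mul_left _ _ (by norm_num)]
  · rw [show 30*t = 5*(6*t) by ring, show q*5 = 5*q by ring,
      Nat.mul_div_mul_left _ _ (by norm_num)]
  · rw [show 30*t = 30*t by rfl, show q*30 = 30*q by ring,
      Nat.mul_div_mul_left _ _ (by norm_num)]

def AA : ℕ := (30*t)! * t !
def BB : ℕ := (15*t)! * ((10*t)! * (6*t)!)

theorem AA_ne_zero : AA t ≠ 0 := by
  simp [AA, Nat.factorial_ne_zero, mul_ne_zero]

theorem BB_ne_zero : BB t ≠ 0 := by
  simp [BB, Nat.factorial_ne_zero, mul_ne_zero]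

theorem fac_AA {p : ℕ} (hp : p.Prime) {b : ℕ} (hb : Nat.log p (30*t) < b) :
    (AA t).factorization p = ∑ i ∈ Ico 1 b, (30*t/p^i + t/p^i) := by
  rw [AA, Nat.factorization_mul (Nat.factorial_ne_zero _) (Nat.factorial_ne_zero _)]
  rw [Finsupp.add_apply, fact_fac hp hb, fact_fac hp
      (lt_of_le_of_lt (Nat.log_mono_right (by omega)) hb), ← Finset.sum_add_distrib]

theorem fac_BB {p : ℕ} (hp : p.Prime) {b : ℕ} (hb : Nat.log p (30*t) < b) :
    (BB t).factorization p = ∑ i ∈ Ico 1 b, (15*t/p^i + (10*t/p^i + 6*t/p^i)) := by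
  have h15 : Nat.log p (15*t) < b := lt_of_le_of_lt (Nat.log_mono_right (by omega)) hb
  have h10 : Nat.log p (10*t) < b := lt_of_le_of_lt (Nat.log_mono_right (by omega)) hb
  have h6 : Nat.log p (6*t) < b := lt_of_le_of_lt (Nat.log_mono_right (by omega)) hb
  rw [BB, Nat.factorization_mul (Nat.factorial_ne_zero _)
      (mul_ne_zero (Nat.factorial_ne_zero _) (Nat.factorial_ne_zero _)),
    Nat.factorization_mul (Nat.factorial_ne_zero _) (Nat.factorial_ne_zero _)]
  simp only [Finsupp.add_apply]
  rw [fact_fac hp h15, fact_fac hp h10, fact_fac hp h6, ← Finset.sum_add_distrib,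
    ← Finset.sum_add_distrib]

theorem BB_le_AA_fac {p : ℕ} (hp : p.Prime) :
    (BB t).factorization p ≤ (AA t).factorization p := by
  rw [fac_AA t hp (b := Nat.log p (30*t) + 1) (by omega), fac_BB t hp (b := Nat.log p (30*t) + 1) (by omega)]
  apply Finset.sum_le_sum
  intro i hi
  obtain ⟨h1, h2, h3, h4⟩ := div_compat t (p^i) (pow_pos hp.pos i)
  rw [h1, h2, h3, h4]
  omega

theorem AA_le_BB_fac {p : ℕ} (hp : p.Prime) :
    (AA t).factorization p ≤ (BB t).factorization p + Nat.log p (30*t) := by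
  rw [fac_AA t hp (b := Nat.log p (30*t) + 1) (by omega), fac_BB t hp (b := Nat.log p (30*t) + 1) (by omega)]
  calc ∑ i ∈ Ico 1 (Nat.log p (30*t) + 1), (30*t/p^i + t/p^i)
      ≤ ∑ i ∈ Ico 1 (Nat.log p (30*t) + 1), (15*t/p^i + (10*t/p^i + 6*t/p^i) + 1) := by
        apply Finset.sum_le_sum
        intro i hi
        obtain ⟨h1, h2, h3, h4⟩ := div_compat t (p^i) (pow_pos hp.pos i)
        rw [h1, h2, h3, h4]
        omega
    _ = (∑ i ∈ Ico 1 (Nat.log p (30*t) + 1), (15*t/p^i + (10*t/p^i + 6*t/p^i))) + Nat.log p (30*t) := by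
        rw [Finset.sum_add_distrib, Finset.sum_const, Nat.card_Ico, smul_eq_mul, mul_one]
        omega

theorem AA_le_BB_fac_one {p : ℕ} (hp : p.Prime) (hps : 30*t < p^2) :
    (AA t).factorization p ≤ (BB t).factorization p + 1 := by
  rw [fac_AA t hp (b := Nat.log p (30*t) + 1) (by omega), fac_BB t hp (b := Nat.log p (30*t) + 1) (by omega)]
  generalize Nat.log p (30*t) + 1 = b
  have hzero : ∀ i, 2 ≤ i → 30*t/p^i + t/p^i = 0 := by
    intro i h2i
    have : p^2 ≤ p^i := Nat.pow_le_pow_right hp.pos h2i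
    have h30 : 30*t < p^i := lt_of_lt_of_le hps this
    rw [Nat.div_eq_of_lt h30, Nat.div_eq_of_lt (by omega)]
  rcases Nat.lt_or_ge b 2 with hb2 | hb2
  · have : ∑ i ∈ Ico 1 b, (30*t/p^i + t/p^i) = 0 := by
      apply Finset.sum_eq_zero; intro i hi; simp at hi; omega
    omega
  · have hsplit : Ico 1 b = insert 1 (Ico 2 b) := by
      ext x; simp [Finset.mem_Ico, Finset.mem_insert]; omega
    rw [hsplit, Finset.sum_insert (by simp), Finset.sum_insert (by simp)]
    have hz : ∑ i ∈ Ico 2 b, (30*t/p^i + t/p^i) = 0 := by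
      apply Finset.sum_eq_zero
      intro i hi
      exact hzero i (by simp at hi; omega)
    rw [hz]
    obtain ⟨h1, h2, h3, h4⟩ := div_compat t (p^1) (pow_pos hp.pos 1)
    rw [h1, h2, h3, h4]
    have hsum : 0 ≤ ∑ i ∈ Ico 2 b, (15*t/p^i + (10*t/p^i + 6*t/p^i)) := Nat.zero_le _
    omega

end

section
variable (t : ℕ)

-- step up: doubling
theorem choose_step_up {n k : ℕ} (h : 3*k + 2 ≤ n) :
    2 * Nat.choose n k ≤ Nat.choose n (k+1) := by
  have he := Nat.choose_succ_right_eq n k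
  have h2 : 2 * Nat.choose n k * (k+1) ≤ Nat.choose n (k+1) * (k+1) := by
    rw [he]
    have : 2*(k+1) ≤ n - k := by omega
    calc 2 * Nat.choose n k * (k+1) = Nat.choose n k * (2*(k+1)) := by ring
      _ ≤ Nat.choose n k * (n - k) := Nat.mul_le_mul_left _ this
  exact Nat.le_of_mul_le_mul_right h2 (by omega)

theorem choose_step_down {n k : ℕ} (h : n ≤ 3*k + 2) :
    Nat.choose n (k+1) ≤ 2 * Nat.choose n k := by
  have he := Nat.choose_succ_right_eq n k
  have h2 : Nat.choose n (k+1) * (k+1) ≤ 2 * Nat.choose n k * (k+1) := by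
    rw [he]
    have : n - k ≤ 2*(k+1) := by omega
    calc Nat.choose n k * (n-k) ≤ Nat.choose n k * (2*(k+1)) := Nat.mul_le_mul_left _ this
      _ = 2 * Nat.choose n k * (k+1) := by ring
  exact Nat.le_of_mul_le_mul_right h2 (by omega)

theorem choose_up_all (d : ℕ) : ∀ k, k + d = 5*t → Nat.choose (15*t) k * 2^d ≤ Nat.choose (15*t) (5*t) := by
  induction d with
  | zero =>
    intro k hk
    have hk' : k = 5*t := by omega
    subst hk'
    simp
  | succ d ih =>
    intro k hk
    have hstep : 2 * Nat.choose (15*t) k ≤ Nat.choose (15*t) (k+1) := choose_step_up (by omega)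
    calc Nat.choose (15*t) k * 2^(d+1) = (2 * Nat.choose (15*t) k) * 2^d := by ring
      _ ≤ Nat.choose (15*t) (k+1) * 2^d := Nat.mul_le_mul_right _ hstep
      _ ≤ Nat.choose (15*t) (5*t) := ih (k+1) (by omega)

theorem choose_down_all (d : ℕ) : Nat.choose (15*t) (5*t + d) ≤ Nat.choose (15*t) (5*t) * 2^d := by
  induction d with
  | zero => simp
  | succ d ih =>
    have hstep : Nat.choose (15*t) (5*t + d + 1) ≤ 2 * Nat.choose (15*t) (5*t + d) :=
      choose_step_down (by omega)
    calc Nat.choose (15*t) (5*t + (d+1)) = Nat.choose (15*t) (5*t + d + 1) := by ring_nf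
      _ ≤ 2 * Nat.choose (15*t) (5*t + d) := hstep
      _ ≤ 2 * (Nat.choose (15*t) (5*t) * 2^d) := Nat.mul_le_mul_left _ ih
      _ = Nat.choose (15*t) (5*t) * 2^(d+1) := by ring

theorem max_term (k : ℕ) (hk : k ≤ 15*t) :
    Nat.choose (15*t) k * 2^(15*t - k) ≤ Nat.choose (15*t) (5*t) * 2^(10*t) := by
  rcases le_or_gt k (5*t) with h | h
  · have h1 := choose_up_all t (5*t - k) k (by omega)
    calc Nat.choose (15*t) k * 2^(15*t-k)
        = (Nat.choose (15*t) k * 2^(5*t-k)) * 2^(10*t) := by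
          rw [mul_assoc, ← pow_add]; congr 2; omega
      _ ≤ Nat.choose (15*t) (5*t) * 2^(10*t) := Nat.mul_le_mul_right _ h1
  · have h1 := choose_down_all t (k - 5*t)
    have hk5 : 5*t + (k - 5*t) = k := by omega
    rw [hk5] at h1
    calc Nat.choose (15*t) k * 2^(15*t-k)
        ≤ (Nat.choose (15*t) (5*t) * 2^(k-5*t)) * 2^(15*t-k) := Nat.mul_le_mul_right _ h1
      _ = Nat.choose (15*t) (5*t) * 2^(10*t) := by
          rw [mul_assoc, ← pow_add]; congr 2; omega

theorem C15_lower : 3^(15*t) ≤ (15*t+1) * (Nat.choose (15*t) (5*t) * 2^(10*t)) := by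
  have hexp : (3:ℕ)^(15*t) = ∑ k ∈ range (15*t+1), 1^k * 2^(15*t-k) * Nat.choose (15*t) k := by
    rw [show (3:ℕ) = 1 + 2 by norm_num, add_pow]
    simp [Nat.cast_id]
  rw [hexp]
  calc ∑ k ∈ range (15*t+1), 1^k * 2^(15*t-k) * Nat.choose (15*t) k
      ≤ ∑ _k ∈ range (15*t+1), Nat.choose (15*t) (5*t) * 2^(10*t) := by
        apply Finset.sum_le_sum
        intro k hk
        simp only [one_pow, one_mul]
        rw [mul_comm]
        exact max_term t k (by simp at hk; omega)
    _ = (15*t+1) * (Nat.choose (15*t) (5*t) * 2^(10*t)) := by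
        rw [Finset.sum_const, Finset.card_range, smul_eq_mul]

theorem C6_upper : Nat.choose (6*t) t * 5^(5*t) ≤ 6^(6*t) := by
  have hexp : (6:ℕ)^(6*t) = ∑ k ∈ range (6*t+1), 1^k * 5^(6*t-k) * Nat.choose (6*t) k := by
    rw [show (6:ℕ) = 1 + 5 by norm_num, add_pow]
    simp [Nat.cast_id]
  rw [hexp]
  have hmem : t ∈ range (6*t+1) := by simp; omega
  calc Nat.choose (6*t) t * 5^(5*t) = 1^t * 5^(6*t-t) * Nat.choose (6*t) t := by
        simp only [one_pow, one_mul]; rw [mul_comm]; congr 2; omega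
    _ ≤ ∑ k ∈ range (6*t+1), 1^k * 5^(6*t-k) * Nat.choose (6*t) k :=
        Finset.single_le_sum (f := fun k => 1^k * 5^(6*t-k) * Nat.choose (6*t) k) (fun k _ => Nat.zero_le _) hmem

end

section
variable (t : ℕ)

theorem key_identity :
    AA t * Nat.choose (6*t) t = BB t * (Nat.choose (30*t) (15*t) * Nat.choose (15*t) (5*t)) := by
  have e30 : Nat.choose (30*t) (15*t) * (15*t)! * (15*t)! = (30*t)! := by
    have := Nat.choose_mul_factorial_mul_factorial (show 15*t ≤ 30*t by omega)
    rwa [show 30*t - 15*t = 15*t by omega] at this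
  have e15 : Nat.choose (15*t) (5*t) * (5*t)! * (10*t)! = (15*t)! := by
    have := Nat.choose_mul_factorial_mul_factorial (show 5*t ≤ 15*t by omega)
    rwa [show 15*t - 5*t = 10*t by omega] at this
  have e6 : Nat.choose (6*t) t * t ! * (5*t)! = (6*t)! := by
    have := Nat.choose_mul_factorial_mul_factorial (show t ≤ 6*t by omega)
    rwa [show 6*t - t = 5*t by omega] at this
  have key : AA t * Nat.choose (6*t) t * ((5*t)!) =
      BB t * (Nat.choose (30*t) (15*t) * Nat.choose (15*t) (5*t)) * ((5*t)!) := by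
    calc AA t * Nat.choose (6*t) t * ((5*t)!)
        = (30*t)! * (Nat.choose (6*t) t * t ! * (5*t)!) := by rw [AA]; ring
      _ = (30*t)! * (6*t)! := by rw [e6]
      _ = (Nat.choose (30*t) (15*t) * (15*t)! * (15*t)!) * (6*t)! := by rw [e30]
      _ = (Nat.choose (30*t) (15*t) * (15*t)! * (Nat.choose (15*t) (5*t) * (5*t)! * (10*t)!)) * (6*t)! := by
          rw [e15]
      _ = BB t * (Nat.choose (30*t) (15*t) * Nat.choose (15*t) (5*t)) * ((5*t)!) := by
          rw [BB]; ring
  exact Nat.eq_of_mul_eq_mul_right (Nat.factorial_pos _) key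

theorem QL (ht : 1 ≤ t) :
    BB t * (2^(14*t) * 3^(9*t) * 5^(5*t)) ≤ (30*t+1) * (15*t+1) * AA t := by
  have hC30 : 4^(15*t) ≤ (30*t+1) * Nat.choose (30*t) (15*t) := by
    have h := Nat.four_pow_le_two_mul_self_mul_centralBinom (15*t) (by omega)
    have : Nat.centralBinom (15*t) = Nat.choose (30*t) (15*t) := by
      rw [Nat.centralBinom_eq_two_mul_choose]; congr 1; ring
    rw [this] at h
    calc (4:ℕ)^(15*t) ≤ 2*(15*t) * Nat.choose (30*t) (15*t) := h
      _ ≤ (30*t+1) * Nat.choose (30*t) (15*t) := Nat.mul_le_mul_right _ (by omega)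
  have hC15 : 3^(15*t) ≤ (15*t+1) * (Nat.choose (15*t) (5*t) * 2^(10*t)) := C15_lower t
  have hC6 : Nat.choose (6*t) t * 5^(5*t) ≤ 6^(6*t) := C6_upper t
  -- combine
  have step1 : BB t * (4^(15*t) * 3^(15*t) * 5^(5*t)) ≤
      (30*t+1) * (15*t+1) * (AA t * Nat.choose (6*t) t) * (2^(10*t) * 5^(5*t)) := by
    rw [key_identity]
    calc BB t * (4^(15*t) * 3^(15*t) * 5^(5*t))
        ≤ BB t * (((30*t+1) * Nat.choose (30*t) (15*t)) * ((15*t+1) * (Nat.choose (15*t) (5*t) * 2^(10*t))) * 5^(5*t)) := by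
          apply Nat.mul_le_mul_left
          exact Nat.mul_le_mul (Nat.mul_le_mul hC30 hC15) (le_refl _)
      _ = (30*t+1) * (15*t+1) * (BB t * (Nat.choose (30*t) (15*t) * Nat.choose (15*t) (5*t))) * (2^(10*t) * 5^(5*t)) := by
          ring
  have step2 : (30*t+1) * (15*t+1) * (AA t * Nat.choose (6*t) t) * (2^(10*t) * 5^(5*t)) ≤
      (30*t+1) * (15*t+1) * AA t * (2^(10*t) * 6^(6*t)) := by
    calc (30*t+1) * (15*t+1) * (AA t * Nat.choose (6*t) t) * (2^(10*t) * 5^(5*t))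
        = ((30*t+1) * (15*t+1) * AA t * 2^(10*t)) * (Nat.choose (6*t) t * 5^(5*t)) := by ring
      _ ≤ ((30*t+1) * (15*t+1) * AA t * 2^(10*t)) * 6^(6*t) := Nat.mul_le_mul_left _ hC6
      _ = (30*t+1) * (15*t+1) * AA t * (2^(10*t) * 6^(6*t)) := by ring
  have hfinal : BB t * (4^(15*t) * 3^(15*t) * 5^(5*t)) ≤
      (30*t+1) * (15*t+1) * AA t * (2^(10*t) * 6^(6*t)) := le_trans step1 step2
  -- rewrite powers: 4^(15t) = 2^(30t), 6^(6t) = 2^(6t) 3^(6t)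
  have hpow4 : (4:ℕ)^(15*t) = 2^(30*t) := by
    rw [show (4:ℕ) = 2^2 by norm_num, ← pow_mul]; congr 1; ring
  have hpow6 : (6:ℕ)^(6*t) = 2^(6*t) * 3^(6*t) := by
    rw [show (6:ℕ) = 2*3 by norm_num, mul_pow]
  rw [hpow4, hpow6] at hfinal
  -- now cancel 2^(16t) * 3^(6t)
  refine Nat.le_of_mul_le_mul_right ?_ (show 0 < 2^(16*t) * 3^(6*t) by positivity)
  · calc BB t * (2^(14*t) * 3^(9*t) * 5^(5*t)) * (2^(16*t) * 3^(6*t))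
        = BB t * (2^(30*t) * 3^(15*t) * 5^(5*t)) := by
          rw [show 30*t = 14*t+16*t by ring, show 15*t = 9*t+6*t by ring, pow_add, pow_add]
          ring
      _ ≤ (30*t+1) * (15*t+1) * AA t * (2^(10*t) * (2^(6*t) * 3^(6*t))) := hfinal
      _ = (30*t+1) * (15*t+1) * AA t * (2^(16*t) * 3^(6*t)) := by
          rw [← mul_assoc (2^(10*t)), ← pow_add]
          congr 3
          ring

end
open Finset Nat

-- π(y) ≤ (y+1)/2 + 1
theorem card_primesBelow_le (y : ℕ) : (Nat.primesBelow y).card ≤ (y+1)/2 + 1 := by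
  have hsub : Nat.primesBelow y ⊆ insert 2 ((Finset.range y).filter (fun p => p % 2 = 1)) := by
    intro p hp
    have hprime := Nat.prime_of_mem_primesBelow hp
    have hlt := Nat.lt_of_mem_primesBelow hp
    rcases hprime.eq_two_or_odd with h2 | hodd
    · simp [h2]
    · simp [Finset.mem_insert, Finset.mem_filter, Finset.mem_range]
      omega
  calc (Nat.primesBelow y).card ≤ (insert 2 ((Finset.range y).filter (fun p => p % 2 = 1))).card :=
        Finset.card_le_card hsub
    _ ≤ ((Finset.range y).filter (fun p => p % 2 = 1)).card + 1 := Finset.card_insert_le _ _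
    _ ≤ (y+1)/2 + 1 := by
        have hinj : ∀ a ∈ (Finset.range y).filter (fun p => p % 2 = 1), a / 2 ∈ Finset.range ((y+1)/2) := by
          intro a ha
          simp only [Finset.mem_filter, Finset.mem_range] at ha ⊢
          omega
        have := Finset.card_le_card_of_injOn (fun a => a / 2) hinj (by
          intro a ha b hb hab
          simp only [Finset.mem_coe, Finset.mem_filter, Finset.mem_range] at ha hb
          simp only at hab
          omega)
        simpa using this
open Finset Nat

-- factorization of ∏_{p ∈ primesBelow y} p ^ (f p)
theorem fac_prod_pow (y : ℕ) (f : ℕ → ℕ) (q : ℕ) :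
    (∏ p ∈ Nat.primesBelow y, p ^ (f p)).factorization q =
      if q ∈ Nat.primesBelow y then f q else 0 := by
  rw [Nat.factorization_prod (fun p hp => pow_ne_zero _ (Nat.prime_of_mem_primesBelow hp).ne_zero)]
  rw [Finset.sum_apply']
  have : ∀ p ∈ Nat.primesBelow y, (p ^ (f p)).factorization q = if p = q then f p else 0 := by
    intro p hp
    rw [(Nat.prime_of_mem_primesBelow hp).factorization_pow, Finsupp.single_apply]
  rw [Finset.sum_congr rfl this, Finset.sum_ite_eq' (Nat.primesBelow y) q f]


section
variable (t : ℕ) (ht : 1 ≤ t)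

theorem BB_dvd_AA : BB t ∣ AA t := by
  rw [← Nat.factorization_le_iff_dvd (BB_ne_zero t) (AA_ne_zero t)]
  rw [Finsupp.le_def]
  intro q
  by_cases hq : q.Prime
  · exact BB_le_AA_fac t hq
  · simp [Nat.factorization_eq_zero_of_not_prime _ hq]

def QQ : ℕ := AA t / BB t

theorem AA_eq : AA t = BB t * QQ t := (Nat.mul_div_cancel' (BB_dvd_AA t)).symm

theorem QQ_ne_zero : QQ t ≠ 0 := by
  intro h
  have := AA_eq t
  rw [h, mul_zero] at this
  exact AA_ne_zero t this

theorem fac_QQ {q : ℕ} :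
    (QQ t).factorization q = (AA t).factorization q - (BB t).factorization q := by
  rw [QQ, Nat.factorization_div (BB_dvd_AA t), Finsupp.tsub_apply]

def MM : ℕ := ∏ p ∈ Nat.primesBelow (Nat.sqrt (30*t) + 1), p ^ (Nat.log p (30*t))

def WW : ℕ := MM t * primorial (30*t)

theorem primorial_eq (n : ℕ) : primorial n = ∏ p ∈ Nat.primesBelow (n+1), p := rfl

theorem fac_primorial (n q : ℕ) :
    (primorial n).factorization q = if q ∈ Nat.primesBelow (n+1) then 1 else 0 := by
  rw [primorial_eq]
  have h : ∏ p ∈ Nat.primesBelow (n+1), p = ∏ p ∈ Nat.primesBelow (n+1), p ^ ((fun _ => 1) p) := by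
    simp
  rw [h, fac_prod_pow]

theorem MM_ne_zero : MM t ≠ 0 := by
  rw [MM]
  exact Finset.prod_ne_zero_iff.mpr
    (fun p hp => pow_ne_zero _ (Nat.prime_of_mem_primesBelow hp).ne_zero)

theorem QQ_dvd_WW : QQ t ∣ WW t := by
  have hW_ne : WW t ≠ 0 := mul_ne_zero (MM_ne_zero t) (primorial_pos (30*t)).ne'
  rw [← Nat.factorization_le_iff_dvd (QQ_ne_zero t) hW_ne]
  rw [Finsupp.le_def]
  intro q
  by_cases hq : q.Prime
  · have hWfac : (WW t).factorization q =
        (if q ∈ Nat.primesBelow (Nat.sqrt (30*t) + 1) then Nat.log q (30*t) else 0) +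
        (if q ∈ Nat.primesBelow (30*t+1) then 1 else 0) := by
      rw [WW, Nat.factorization_mul (MM_ne_zero t) (primorial_pos (30*t)).ne',
        Finsupp.add_apply, MM, fac_prod_pow, fac_primorial]
    rw [hWfac, fac_QQ]
    rcases Nat.lt_or_ge q (Nat.sqrt (30*t) + 1) with hsq | hsq
    · have hin : q ∈ Nat.primesBelow (Nat.sqrt (30*t) + 1) := by
        rw [Nat.mem_primesBelow]; exact ⟨hsq, hq⟩
      rw [if_pos hin]
      have := AA_le_BB_fac t hq
      omega
    · rcases Nat.lt_or_ge (30*t) q with hbig | hsmall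
      · have hA0 : (AA t).factorization q = 0 := by
          rw [AA, Nat.factorization_mul (Nat.factorial_ne_zero _) (Nat.factorial_ne_zero _),
            Finsupp.add_apply, Nat.factorization_factorial_eq_zero_of_lt hbig,
            Nat.factorization_factorial_eq_zero_of_lt (by omega)]
        omega
      · have hin : q ∈ Nat.primesBelow (30*t+1) := by
          rw [Nat.mem_primesBelow]; exact ⟨by omega, hq⟩
        rw [if_pos hin]
        have hq2 : 30*t < q^2 := by
          have h1 : Nat.sqrt (30*t) < q := by omega
          exact (Nat.sqrt_lt'.mp h1)
        have := AA_le_BB_fac_one t hq hq2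
        omega
  · simp [Nat.factorization_eq_zero_of_not_prime _ hq]

theorem MM_le (ht : 1 ≤ t) : MM t ≤ (30*t) ^ (Nat.sqrt (30*t) / 2 + 2) := by
  have h1 : MM t ≤ (30*t) ^ (Nat.primesBelow (Nat.sqrt (30*t) + 1)).card := by
    rw [MM]
    apply Finset.prod_le_pow_card
    intro p hp
    exact Nat.pow_log_le_self p (by omega)
  have h2 : (Nat.primesBelow (Nat.sqrt (30*t) + 1)).card ≤ Nat.sqrt (30*t) / 2 + 2 :=
    le_trans (card_primesBelow_le (Nat.sqrt (30*t) + 1)) (by omega)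
  calc MM t ≤ (30*t) ^ (Nat.primesBelow (Nat.sqrt (30*t) + 1)).card := h1
    _ ≤ (30*t) ^ (Nat.sqrt (30*t) / 2 + 2) := Nat.pow_le_pow_right (by omega) h2

theorem QQ_lower (ht : 1 ≤ t) :
    2^(14*t) * 3^(9*t) * 5^(5*t) ≤ (30*t+1) * (15*t+1) * QQ t := by
  have h := QL t ht
  rw [AA_eq t] at h
  have h2 : BB t * (2^(14*t) * 3^(9*t) * 5^(5*t)) ≤ BB t * ((30*t+1) * (15*t+1) * QQ t) := by
    calc BB t * (2^(14*t) * 3^(9*t) * 5^(5*t)) ≤ (30*t+1) * (15*t+1) * (BB t * QQ t) := h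
      _ = BB t * ((30*t+1) * (15*t+1) * QQ t) := by ring
  exact Nat.le_of_mul_le_mul_left h2 (Nat.pos_of_ne_zero (BB_ne_zero t))

end
open Finset Nat

theorem TAIL : ∀ L, 21 ≤ L → 20 * ((L+2) * (2^((L+3)/2) + 8) + 2*L + 48) ≤ 2^L := by
  intro L
  induction L using Nat.strong_induction_on with
  | _ L ih =>
    intro hL
    rcases le_or_gt L 22 with h22 | h22
    · interval_cases L <;> norm_num
    · obtain ⟨K, rfl⟩ : ∃ K, L = K + 2 := ⟨L - 2, by omega⟩
      have ihL := ih K (by omega) (by omega)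
      have hexp : (K+2+3)/2 = (K+3)/2 + 1 := by omega
      rw [hexp, pow_succ]
      set X := 2^((K+3)/2) with hX
      have e1 : (K+2+2) * (X*2 + 8) = 2*(K*X) + 8*X + 8*K + 32 := by ring
      have e2 : (K+2) * (X + 8) = K*X + 2*X + 8*K + 16 := by ring
      have epow : (2:ℕ)^(K+2) = 4 * 2^K := by ring
      rw [epow]
      clear_value X
      generalize (2:ℕ)^K = Y at *
      have hKX := Nat.zero_le (K*X)
      linarith

theorem pow_X_lower (t : ℕ) : 2^(25*t + 5*(t/6)) ≤ 61509375^t := by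
  have hsplit : (61509375:ℕ)^t = ((61509375:ℕ)^6)^(t/6) * 61509375^(t % 6) := by
    rw [← pow_mul, ← pow_add]
    congr 1
    omega
  have h6 : (2:ℕ)^155 ≤ (61509375:ℕ)^6 := by norm_num
  have h1 : (2:ℕ)^25 ≤ 61509375 := by norm_num
  calc (2:ℕ)^(25*t + 5*(t/6)) = (2^155)^(t/6) * (2^25)^(t % 6) := by
        rw [← pow_mul, ← pow_mul, ← pow_add]
        congr 1
        omega
    _ ≤ ((61509375:ℕ)^6)^(t/6) * 61509375^(t % 6) := by
        exact Nat.mul_le_mul (Nat.pow_le_pow_left h6 _) (Nat.pow_le_pow_left h1 _)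
    _ = 61509375^t := hsplit.symm

theorem KEY (t : ℕ) (ht : 2^21 ≤ 30*t) :
    ∃ p, p.Prime ∧ p ≤ 30*t ∧ 210*t + 210 ≤ 11*p := by
  by_contra hcon
  push_neg at hcon
  have ht1 : 1 ≤ t := by omega
  have hn0 : 30*t ≠ 0 := by omega
  -- notation
  set L := Nat.log 2 (30*t) with hLdef
  set s := Nat.sqrt (30*t) with hsdef
  set m := (210*t + 209)/11 with hmdef
  have hL1 : 2^L ≤ 30*t := Nat.pow_log_le_self 2 hn0
  have hL2 : 30*t < 2^(L+1) := Nat.lt_pow_succ_log_self (by norm_num) _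
  have hL21 : 21 ≤ L := (Nat.le_log_iff_pow_le (by norm_num) hn0).mpr ht
  -- all primes ≤ 30t are ≤ m
  have hallp : ∀ p, p.Prime → p ≤ 30*t → p ≤ m := by
    intro p hp hple
    have := hcon p hp hple
    rw [hmdef]
    rw [Nat.le_div_iff_mul_le (by norm_num)]
    omega
  -- primorial bound
  have hprim : primorial (30*t) ≤ 4^m := by
    have hsub : Nat.primesBelow (30*t+1) ⊆ Nat.primesBelow (m+1) := by
      intro p hp
      have h1 := Nat.prime_of_mem_primesBelow hp
      have h2 := Nat.lt_of_mem_primesBelow hp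
      rw [Nat.mem_primesBelow]
      exact ⟨by have := hallp p h1 (by omega); omega, h1⟩
    calc primorial (30*t) = ∏ p ∈ Nat.primesBelow (30*t+1), p := primorial_eq _
      _ ≤ ∏ p ∈ Nat.primesBelow (m+1), p :=
          Finset.prod_le_prod_of_subset_of_one_le' hsub
            (fun p hp _ => (Nat.prime_of_mem_primesBelow hp).one_lt.le)
      _ = primorial m := (primorial_eq _).symm
      _ ≤ 4^m := primorial_le_4_pow m
  -- sqrt bound
  have hs : s ≤ 2^((L+3)/2) := by
    have h1 : 30*t < (2^((L+3)/2))^2 := by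
      calc 30*t < 2^(L+1) := hL2
        _ ≤ 2^(2*((L+3)/2)) := Nat.pow_le_pow_right (by norm_num) (by omega)
        _ = (2^((L+3)/2))^2 := by rw [← pow_mul]; congr 1; ring
    exact le_of_lt (Nat.sqrt_lt'.mpr h1)
  -- main chain
  have hchain : 2^(14*t) * 61509375^t ≤ 2^((L+1) + (L+1) + (L+1)*(s/2+2) + 2*m) := by
    have hX : 2^(14*t) * 61509375^t = 2^(14*t) * 3^(9*t) * 5^(5*t) := by
      rw [show (61509375:ℕ) = 3^9 * 5^5 by norm_num, mul_pow, ← pow_mul, ← pow_mul]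
      ring_nf
    rw [hX]
    calc 2^(14*t) * 3^(9*t) * 5^(5*t)
        ≤ (30*t+1) * (15*t+1) * QQ t := QQ_lower t ht1
      _ ≤ (30*t+1) * (15*t+1) * WW t := by
          apply Nat.mul_le_mul_left
          exact Nat.le_of_dvd (Nat.pos_of_ne_zero (mul_ne_zero (MM_ne_zero t)
            (primorial_pos (30*t)).ne')) (QQ_dvd_WW t)
      _ = (30*t+1) * (15*t+1) * (MM t * primorial (30*t)) := by rw [WW]
      _ ≤ 2^(L+1) * 2^(L+1) * ((30*t)^(s/2+2) * 4^m) := by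
          apply Nat.mul_le_mul
          · exact Nat.mul_le_mul (by omega) (by omega)
          · exact Nat.mul_le_mul (MM_le t ht1) hprim
      _ ≤ 2^(L+1) * 2^(L+1) * ((2^(L+1))^(s/2+2) * 4^m) := by
          apply Nat.mul_le_mul_left
          apply Nat.mul_le_mul_right
          exact Nat.pow_le_pow_left (le_of_lt hL2) _
      _ = 2^((L+1) + (L+1) + (L+1)*(s/2+2) + 2*m) := by
          rw [show (4:ℕ) = 2^2 by norm_num, ← pow_mul, ← pow_mul, ← pow_add, ← pow_add, ← pow_add]
          congr 1
          ring
  -- lower bound on LHS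
  have hlow : 2^(39*t + 5*(t/6)) ≤ 2^(14*t) * 61509375^t := by
    calc (2:ℕ)^(39*t + 5*(t/6)) = 2^(14*t) * 2^(25*t + 5*(t/6)) := by
          rw [← pow_add]; congr 1; omega
      _ ≤ 2^(14*t) * 61509375^t := Nat.mul_le_mul_left _ (pow_X_lower t)
  -- exponent comparison
  have hTAIL := TAIL L hL21
  have hPS2 : 2*((L+1)*(s/2+2)) ≤ (L+2)*(s+8) := by
    calc 2*((L+1)*(s/2+2)) = (L+1)*(2*(s/2+2)) := by ring
      _ ≤ (L+2)*(s+8) := Nat.mul_le_mul (by omega) (by omega)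
  have hs8 : (L+2)*(s+8) ≤ (L+2)*(2^((L+3)/2)+8) := Nat.mul_le_mul_left _ (by omega)
  have hexp : (L+1) + (L+1) + (L+1)*(s/2+2) + 2*m + 1 ≤ 39*t + 5*(t/6) := by
    set PS := (L+1)*(s/2+2)
    set P1 := (L+2)*(s+8)
    set PK := (L+2)*(2^((L+3)/2)+8)
    omega
  -- contradiction
  have : (2:ℕ)^(39*t + 5*(t/6)) ≤ 2^((L+1) + (L+1) + (L+1)*(s/2+2) + 2*m) :=
    le_trans hlow hchain
  have hle := (Nat.pow_le_pow_iff_right (by norm_num : 1 < 2)).mp this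
  omega


theorem MAIN_small (n : ℕ) (h5 : 5 ≤ n) (hN : n ≤ 2228754) :
    ∃ p, p.Prime ∧ p ≤ n ∧ 7*n+7 ≤ 11*p := by
  rcases le_or_gt n 6 with h5 | h5
  · exact ⟨5, by norm_num, by omega, by omega⟩
  rcases le_or_gt n 10 with h7 | h7
  · exact ⟨7, by norm_num, by omega, by omega⟩
  rcases le_or_gt n 16 with h11 | h11
  · exact ⟨11, by norm_num, by omega, by omega⟩
  rcases le_or_gt n 25 with h17 | h17
  · exact ⟨17, by norm_num, by omega, by omega⟩
  rcases le_or_gt n 35 with h23 | h23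
  · exact ⟨23, by norm_num, by omega, by omega⟩
  rcases le_or_gt n 47 with h31 | h31
  · exact ⟨31, by norm_num, by omega, by omega⟩
  rcases le_or_gt n 72 with h47 | h47
  · exact ⟨47, by norm_num, by omega, by omega⟩
  rcases le_or_gt n 113 with h73 | h73
  · exact ⟨73, by norm_num, by omega, by omega⟩
  rcases le_or_gt n 176 with h113 | h113
  · exact ⟨113, by norm_num, by omega, by omega⟩
  rcases le_or_gt n 270 with h173 | h173
  · exact ⟨173, by norm_num, by omega, by omega⟩
  rcases le_or_gt n 424 with h271 | h271
  · exact ⟨271, by norm_num, by omega, by omega⟩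
  rcases le_or_gt n 660 with h421 | h421
  · exact ⟨421, by norm_num, by omega, by omega⟩
  rcases le_or_gt n 1037 with h661 | h661
  · exact ⟨661, by norm_num, by omega, by omega⟩
  rcases le_or_gt n 1622 with h1033 | h1033
  · exact ⟨1033, by norm_num, by omega, by omega⟩
  rcases le_or_gt n 2546 with h1621 | h1621
  · exact ⟨1621, by norm_num, by omega, by omega⟩
  rcases le_or_gt n 3995 with h2543 | h2543
  · exact ⟨2543, by norm_num, by omega, by omega⟩
  rcases le_or_gt n 6267 with h3989 | h3989
  · exact ⟨3989, by norm_num, by omega, by omega⟩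
  rcases le_or_gt n 9840 with h6263 | h6263
  · exact ⟨6263, by norm_num, by omega, by omega⟩
  rcases le_or_gt n 15460 with h9839 | h9839
  · exact ⟨9839, by norm_num, by omega, by omega⟩
  rcases le_or_gt n 24294 with h15461 | h15461
  · exact ⟨15461, by norm_num, by omega, by omega⟩
  rcases le_or_gt n 38154 with h24281 | h24281
  · exact ⟨24281, by norm_num, by omega, by omega⟩
  rcases le_or_gt n 59953 with h38153 | h38153
  · exact ⟨38153, by norm_num, by omega, by omega⟩
  rcases le_or_gt n 94207 with h59951 | h59951
  · exact ⟨59951, by norm_num, by omega, by omega⟩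
  rcases le_or_gt n 148038 with h94207 | h94207
  · exact ⟨94207, by norm_num, by omega, by omega⟩
  rcases le_or_gt n 232603 with h148021 | h148021
  · exact ⟨148021, by norm_num, by omega, by omega⟩
  rcases le_or_gt n 365508 with h232597 | h232597
  · exact ⟨232597, by norm_num, by omega, by omega⟩
  rcases le_or_gt n 574370 with h365509 | h365509
  · exact ⟨365509, by norm_num, by omega, by omega⟩
  rcases le_or_gt n 902575 with h574367 | h574367
  · exact ⟨574367, by norm_num, by omega, by omega⟩
  rcases le_or_gt n 1418321 with h902569 | h902569
  · exact ⟨902569, by norm_num, by omega, by omega⟩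
  rcases le_or_gt n 2228754 with h1418299 | h1418299
  · exact ⟨1418299, by norm_num, by omega, by omega⟩
  omega


theorem MAIN (n : ℕ) (h5 : 5 ≤ n) : ∃ p, p.Prime ∧ p ≤ n ∧ 7*n+7 ≤ 11*p := by
  rcases le_or_gt n 2228754 with hsmall | hbig
  · exact MAIN_small n h5 hsmall
  · obtain ⟨p, hp, hple, hlow⟩ := KEY (n/30) (by omega)
    exact ⟨p, hp, by omega, by omega⟩

theorem pc_lt {a p n : ℕ} (hp : p.Prime) (h1 : a < p) (h2 : p ≤ n) :
    Nat.primeCounting a < Nat.primeCounting n := by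
  have e1 : Nat.primeCounting a = Nat.count Nat.Prime (a+1) := rfl
  have e2 : Nat.primeCounting n = Nat.count Nat.Prime (n+1) := rfl
  rw [e1, e2]
  calc Nat.count Nat.Prime (a+1) ≤ Nat.count Nat.Prime p := Nat.count_monotone _ (by omega)
    _ < Nat.count Nat.Prime (p+1) := by
        rw [Nat.count_succ, if_pos hp]; omega
    _ ≤ Nat.count Nat.Prime (n+1) := Nat.count_monotone _ (by omega)

theorem pc3 : Nat.primeCounting 3 = 2 := by decide
theorem pc4 : Nat.primeCounting 4 = 2 := by decide


end RamanujanAux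

open RamanujanAux in
theorem first_k_ramanujan_stmt11 (k : ℝ) (hk1 : (11 / 7 : ℝ) ≤ k) (hk2 : k < (5 / 3 : ℝ)) :
    firstRamanujanPrime k = 5 := by
  have hk0 : (0:ℝ) < k := by linarith
  set S := {m : ℕ | 0 < m ∧ ∀ x : ℝ, (m : ℝ) ≤ x → primePi (x / k) < primePi x} with hS
  have h5S : 5 ∈ S := by
    constructor
    · norm_num
    · intro x hx
      have hx' : (5:ℝ) ≤ x := by exact_mod_cast hx
      have hx0 : (0:ℝ) < x := by linarith
      have hn5 : 5 ≤ ⌊x⌋₊ := Nat.le_floor (by exact_mod_cast hx)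
      obtain ⟨p, hp, hpn, hineq⟩ := MAIN ⌊x⌋₊ hn5
      have hfl : (⌊x/k⌋₊ : ℝ) ≤ x/k := Nat.floor_le (by positivity)
      have hdk : x/k ≤ 7*x/11 := by
        rw [div_le_div_iff₀ hk0 (by norm_num)]
        nlinarith
      have hxn : x < (⌊x⌋₊ : ℝ) + 1 := Nat.lt_floor_add_one x
      have hpx : 7*x/11 < (p:ℝ) := by
        rw [div_lt_iff₀ (by norm_num)]
        have : (7:ℝ) * ((⌊x⌋₊:ℝ)+1) ≤ 11*p := by exact_mod_cast hineq
        nlinarith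
      have hlt : ⌊x/k⌋₊ < p := by
        have : (⌊x/k⌋₊ : ℝ) < (p:ℝ) := lt_of_le_of_lt hfl (lt_of_le_of_lt hdk hpx)
        exact_mod_cast this
      exact pc_lt hp hlt hpn
  have hge : ∀ m ∈ S, 5 ≤ m := by
    intro m hm
    by_contra hcon
    push_neg at hcon
    have hm4 : (m:ℝ) ≤ 4 := by exact_mod_cast Nat.lt_succ_iff.mp hcon
    have h3k : (m:ℝ) ≤ 3*k := by nlinarith
    have := hm.2 (3*k) h3k
    have hq : 3*k/k = (3:ℝ) := by field_simp
    have hf3 : ⌊(3:ℝ)⌋₊ = 3 := by norm_num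
    have hf4 : ⌊3*k⌋₊ = 4 := by
      rw [Nat.floor_eq_iff (by positivity)]
      constructor
      · push_cast; nlinarith
      · push_cast; nlinarith
    rw [primePi, primePi, hq, hf3, hf4, pc3, pc4] at this
    omega
  have hmem := Nat.sInf_mem (⟨5, h5S⟩ : S.Nonempty)
  have hle : sInf S ≤ 5 := Nat.sInf_le h5S
  have := hge _ hmem
  have heq : firstRamanujanPrime k = sInf S := rfl
  rw [heq]
  omega
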